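/- Let S₁, S₂ ∈ {−1,+1}^m be distinct sign vectors, and M an m×n matrix. If some column c of M satisfies sign(c_i) = (S₂)_i for all i, then for any x in the cell of S₁ (i.e., sign((Mx+b)_i) = (S₁)_i for all i), there is a point y differing from x in exactly one coordinate that lies in the cell of S₂. -/
import Mathlib

lemma sign_add_big {a c t : ℝ} (ha : a ≠ 0) (ht : |c| < t * |a|) :
    Real.sign (c + t * a) = Real.sign a := by
  rcases lt_or_gt_of_ne ha with h | h
  · rw [Real.sign_of_neg h, Real.sign_of_neg]
    have : |c| < t * (-a) := by rwa [abs_of_neg h] at ht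
    have := abs_lt.mp this
    nlinarith
  · rw [Real.sign_of_pos h, Real.sign_of_pos]
    have : |c| < t * a := by rwa [abs_of_pos h] at ht
    have := abs_lt.mp this
    nlinarith

theorem stmt_10 {m n : ℕ} (M : Matrix (Fin m) (Fin n) ℝ) (b : Fin m → ℝ)
    (S₁ S₂ : Fin m → ℝ)
    (hS₁ : ∀ i, S₁ i = 1 ∨ S₁ i = -1) (hS₂ : ∀ i, S₂ i = 1 ∨ S₂ i = -1)
    (hne : S₁ ≠ S₂)
    (j₀ : Fin n) (hcol : ∀ i, Real.sign (M i j₀) = S₂ i)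
    (x : Fin n → ℝ) (hx : ∀ i, Real.sign (M.mulVec x i + b i) = S₁ i) :
    ∃ y : Fin n → ℝ,
      (Finset.univ.filter fun j => x j ≠ y j).card = 1 ∧
      ∀ i, Real.sign (M.mulVec y i + b i) = S₂ i := by
  have hM0 : ∀ i, M i j₀ ≠ 0 := by
    intro i h
    rcases hS₂ i with h2 | h2 <;> rw [← hcol i, h, Real.sign_zero] at h2 <;> norm_num at h2
  set t : ℝ := 1 + ∑ i, |M.mulVec x i + b i| / |M i j₀| with ht
  have ht1 : 1 ≤ t := by
    have : (0:ℝ) ≤ ∑ i, |M.mulVec x i + b i| / |M i j₀| :=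
      Finset.sum_nonneg fun i _ => div_nonneg (abs_nonneg _) (abs_nonneg _)
    rw [ht]; linarith
  refine ⟨x + t • (Pi.single j₀ 1 : Fin n → ℝ), ?_, ?_⟩
  · have : (Finset.univ.filter fun j => x j ≠ (x + t • (Pi.single j₀ 1 : Fin n → ℝ)) j) = {j₀} := by
      ext j
      simp only [Finset.mem_filter, Finset.mem_univ, true_and, Finset.mem_singleton,
        Pi.add_apply, Pi.smul_apply, smul_eq_mul]
      constructor
      · intro h
        by_contra hj
        apply h
        rw [Pi.single_eq_of_ne hj]
        ring
      · intro h
        subst h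
        rw [Pi.single_eq_same]
        intro h
        have : t = 0 := by linarith [congrArg (· - x j) h] ; 
        linarith
    rw [this, Finset.card_singleton]
  · intro i
    have hmv : M.mulVec (x + t • (Pi.single j₀ 1 : Fin n → ℝ)) i = M.mulVec x i + t * M i j₀ := by
      rw [Matrix.mulVec_add, Matrix.mulVec_smul, Matrix.mulVec_single]
      simp [mul_comm]
    rw [hmv, ← hcol i]
    have hterm : |M.mulVec x i + b i| / |M i j₀| ≤ ∑ k, |M.mulVec x k + b k| / |M k j₀| :=
      Finset.single_le_sum (f := fun k => |M.mulVec x k + b k| / |M k j₀|)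
        (fun k _ => div_nonneg (abs_nonneg _) (abs_nonneg _)) (Finset.mem_univ i)
    have habs : (0:ℝ) < |M i j₀| := abs_pos.mpr (hM0 i)
    have : |M.mulVec x i + b i| < t * |M i j₀| := by
      rw [ht]
      have := (div_le_iff₀ habs).mp hterm
      nlinarith
    have := sign_add_big (hM0 i) this
    rw [show M.mulVec x i + t * M i j₀ + b i = (M.mulVec x i + b i) + t * M i j₀ by ring]
    exact this
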